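/- For r, s in the field k, the maps Σ^r = Ψ_{t/(1−rt)} on a quasi-shuffle algebra satisfy Σ^r ∘ Σ^s = Σ^{r+s}; in particular each Σ^r is invertible with inverse Σ^{−r}. -/

import Mathlib

/-!
Quasi-shuffle algebras (Hoffman–Ihara).  We model the span `kA` of the alphabet
(with its commutative associative product `⋄`, written `*` in `L`) as a
non-unital commutative `k`-algebra `L`, and the word algebra `k⟨A⟩` as the
tensor algebra `TensorAlgebra k L`, in which a word `a₁⋯aₙ` is the product
`ι a₁ * ⋯ * ι aₙ`.
-/

open TensorAlgebra

variable (k : Type*) [Field k]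
variable {L : Type*} [NonUnitalCommRing L] [Module k L]
  [SMulCommClass k L L] [IsScalarTower k L L]

/-- The word `a₁⋯aₙ` as an element of the tensor algebra. -/
def word (l : List L) : TensorAlgebra k L := (l.map fun a => TensorAlgebra.ι k a).prod

/-- The `⋄`-product of the letters of a nonempty block (junk value `0` on `[]`). -/
def blockProd : List L → L
  | [] => 0
  | a :: t => t.foldl (· * ·) a

/-- The Hoffman–Ihara operator `Ψ_f` on words, for `f = c₁t + c₂t² + ⋯`:
`Ψ_f(w) = Σ_{(i₁,…,i_m) composition of ℓ(w)} c_{i₁}⋯c_{i_m} I[w]`,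
written via the recursion on the first block. -/
def psi (c : ℕ → k) : List L → TensorAlgebra k L
  | [] => 1
  | a :: w => ∑ j ∈ Finset.range (w.length + 1),
      c (j + 1) • (TensorAlgebra.ι k (blockProd (a :: w.take j)) * psi c (w.drop j))
  termination_by l => l.length
  decreasing_by simp [List.length_drop] <;> omega

set_option linter.unusedSectionVars false

lemma word_nil : word k ([] : List L) = 1 := rfl

lemma word_cons (a : L) (l : List L) : word k (a :: l) = TensorAlgebra.ι k a * word k l := by
  simp [word]

lemma word_append (l₁ l₂ : List L) : word k (l₁ ++ l₂) = word k l₁ * word k l₂ := by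
  simp [word]

lemma blockProd_cons_cons (a b : L) (l : List L) :
    blockProd (a :: b :: l) = blockProd ((a * b) :: l) := rfl

lemma blockProd_singleton (a : L) : blockProd [a] = a := rfl

lemma blockProd_mid (a : L) : ∀ (l₁ : List L) (b c : L) (l₂ : List L),
    blockProd (a :: (l₁ ++ b :: c :: l₂)) = blockProd (a :: (l₁ ++ (b * c) :: l₂))
  | [], b, c, l₂ => by
      rw [List.nil_append, List.nil_append, blockProd_cons_cons, blockProd_cons_cons,
        blockProd_cons_cons, mul_assoc]
  | x :: l₁, b, c, l₂ => by
      rw [List.cons_append, List.cons_append, blockProd_cons_cons, blockProd_cons_cons,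
        blockProd_mid (a * x) l₁ b c l₂]

lemma psi_nil (c : ℕ → k) : psi k c ([] : List L) = 1 := by rw [psi]

lemma psi_cons (c : ℕ → k) (a : L) (w : List L) :
    psi k c (a :: w) = ∑ j ∈ Finset.range (w.length + 1),
      c (j + 1) • (TensorAlgebra.ι k (blockProd (a :: w.take j)) * psi k c (w.drop j)) := by
  rw [psi]

/-- `Σ^x`, i.e. `psi` with geometric coefficients `x^(n-1)`. -/
noncomputable abbrev psig (x : k) (w : List L) : TensorAlgebra k L :=
  psi k (fun n => x ^ (n - 1)) w

lemma psig_cons (x : k) (a : L) (w : List L) :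
    psig k x (a :: w) = ∑ j ∈ Finset.range (w.length + 1),
      x ^ j • (TensorAlgebra.ι k (blockProd (a :: w.take j)) * psig k x (w.drop j)) := by
  rw [psig, psi_cons]
  simp only [Nat.add_sub_cancel]

lemma psig_singleton (x : k) (a : L) : psig k x [a] = TensorAlgebra.ι k a := by
  rw [psig_cons]
  simp [psi_nil, blockProd_singleton]

/-- The key three-term recursion for geometric `psi`. -/
lemma psig_three (x : k) (a b : L) (v : List L) :
    psig k x (a :: b :: v) =
      TensorAlgebra.ι k a * psig k x (b :: v) + x • psig k x ((a * b) :: v) := by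
  rw [psig_cons, Finset.sum_range_succ', add_comm]
  congr 1
  · simp [blockProd_singleton]
  · rw [psig_cons, Finset.smul_sum]
    refine Finset.sum_congr rfl fun j hj => ?_
    rw [smul_smul, List.take_succ_cons, blockProd_cons_cons, List.drop_succ_cons]
    congr 1
    ring

lemma psig_zero : ∀ (w : List L), psig k 0 w = word k w
  | [] => by rw [psig, psi_nil, word_nil]
  | a :: w => by
      rw [psig_cons, Finset.sum_range_succ', word_cons, ← psig_zero w]
      have h1 : ∀ j ∈ Finset.range w.length, (0:k) ^ (j+1) • (TensorAlgebra.ι k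
          (blockProd (a :: List.take (j+1) w)) * psig k 0 (List.drop (j+1) w)) = 0 := by
        intro j hj
        rw [zero_pow (Nat.succ_ne_zero j), zero_smul]
      rw [Finset.sum_congr rfl h1, Finset.sum_const, smul_zero, zero_add, pow_zero, one_smul,
        List.take_zero, List.drop_zero, blockProd_singleton]
  termination_by w => w.length
  decreasing_by all_goals (simp [List.length_drop]; try omega)

/-- Auxiliary operator: `E x y p u = Ψ_{t/(1-xt)} (word p * Ψ_{t/(1-yt)} u)` expanded. -/
noncomputable def E (x y : k) : List L → List L → TensorAlgebra k L
  | [], u => psig k (x + y) u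
  | a :: p, u =>
      (∑ j ∈ Finset.range (p.length + 1),
        x ^ j • (TensorAlgebra.ι k (blockProd (a :: p.take j)) * E x y (p.drop j) u))
      + ∑ t ∈ Finset.range u.length,
          (x ^ (p.length + 1) * (x + y) ^ t) •
            (TensorAlgebra.ι k (blockProd ((a :: p) ++ u.take (t+1))) *
              psig k (x + y) (u.drop (t+1)))
  termination_by p _ => p.length
  decreasing_by simp [List.length_drop] <;> omega

lemma E_nil (x y : k) (u : List L) : E k x y [] u = psig k (x + y) u := by rw [E]

lemma E_cons (x y : k) (a : L) (p u : List L) :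
    E k x y (a :: p) u =
      (∑ j ∈ Finset.range (p.length + 1),
        x ^ j • (TensorAlgebra.ι k (blockProd (a :: p.take j)) * E k x y (p.drop j) u))
      + ∑ t ∈ Finset.range u.length,
          (x ^ (p.length + 1) * (x + y) ^ t) •
            (TensorAlgebra.ι k (blockProd ((a :: p) ++ u.take (t+1))) *
              psig k (x + y) (u.drop (t+1))) := by
  rw [E]

/-- On the empty second argument, `E` is `Σ^x`. -/
lemma E_nil_right (x y : k) : ∀ (p : List L), E k x y p [] = psig k x p
  | [] => by rw [E_nil, psig, psig, psi_nil, psi_nil]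
  | a :: p => by
      rw [E_cons, psig_cons]
      simp only [List.length_nil, Finset.range_zero, Finset.sum_empty, add_zero,
        Nat.add_sub_cancel]
      exact Finset.sum_congr rfl fun j hj => by rw [E_nil_right x y (p.drop j)]
  termination_by p => p.length
  decreasing_by all_goals (simp [List.length_drop]; try omega)


lemma E_single (x y : k) : ∀ (p : List L) (b : L), E k x y p [b] = psig k x (p ++ [b])
  | [], b => by rw [E_nil, List.nil_append, psig_singleton, psig_singleton]
  | a :: p, b => by
      rw [E_cons, List.cons_append, psig_cons]
      have hlen : (p ++ [b]).length = p.length + 1 := by simp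
      rw [hlen]
      conv_rhs => rw [Finset.sum_range_succ]
      congr 1
      · refine Finset.sum_congr rfl fun j hj => ?_
        have hj' : j ≤ p.length := Nat.lt_succ_iff.mp (Finset.mem_range.mp hj)
        rw [E_single x y (p.drop j) b, List.take_append_of_le_length hj',
          List.drop_append_of_le_length hj']
      · simp only [List.length_singleton]
        rw [Finset.sum_range_one]
        have ht : List.take (p.length + 1) (p ++ [b]) = p ++ [b] :=
          List.take_of_length_le (le_of_eq hlen)
        have hd : List.drop (p.length + 1) (p ++ [b]) = [] :=
          List.drop_eq_nil_of_le (le_of_eq hlen)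
        rw [ht, hd]
        simp [psig, psi_nil]
  termination_by p _ => p.length
  decreasing_by all_goals (simp [List.length_drop]; try omega)

lemma E_step (x y : k) : ∀ (p : List L) (b c : L) (v : List L),
    E k x y p (b :: c :: v) = E k x y (p ++ [b]) (c :: v) + y • E k x y p ((b * c) :: v)
  | [], b, c, v => by
      have hE : E k x y [b] (c :: v) = TensorAlgebra.ι k b * psig k (x + y) (c :: v)
          + x • psig k (x + y) ((b * c) :: v) := by
        rw [E_cons]
        congr 1
        · simp only [List.length_nil, zero_add, Finset.sum_range_one, pow_zero, one_smul,
            List.take_zero, List.drop_zero, E_nil, blockProd_singleton]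
        · rw [psig_cons, Finset.smul_sum]
          simp only [List.length_cons, List.length_nil, zero_add, pow_one]
          refine Finset.sum_congr rfl fun t ht => ?_
          rw [List.take_succ_cons, List.drop_succ_cons, mul_smul]
          congr 2
      rw [List.nil_append, E_nil, E_nil, hE, psig_three, add_assoc, ← add_smul]
  | a :: p, b, c, v => by
      have hlen : (p ++ [b]).length = p.length + 1 := by simp
      -- (1) expand the first sum of the LHS using the induction hypothesis
      have h1 : (∑ j ∈ Finset.range (p.length + 1),
            x ^ j • (TensorAlgebra.ι k (blockProd (a :: p.take j)) *
              E k x y (p.drop j) (b :: c :: v)))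
          = (∑ j ∈ Finset.range (p.length + 1),
              x ^ j • (TensorAlgebra.ι k (blockProd (a :: p.take j)) *
                E k x y (p.drop j ++ [b]) (c :: v)))
            + y • (∑ j ∈ Finset.range (p.length + 1),
              x ^ j • (TensorAlgebra.ι k (blockProd (a :: p.take j)) *
                E k x y (p.drop j) ((b * c) :: v))) := by
        rw [Finset.smul_sum, ← Finset.sum_add_distrib]
        refine Finset.sum_congr rfl fun j hj => ?_
        rw [E_step x y (p.drop j) b c v, mul_add, smul_add, mul_smul_comm,
          smul_comm (x ^ j) y]
      -- (2) split the crossing sum of the LHS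
      have h2 : (∑ t ∈ Finset.range (b :: c :: v).length,
            (x ^ (p.length + 1) * (x + y) ^ t) •
              (TensorAlgebra.ι k (blockProd ((a :: p) ++ (b :: c :: v).take (t+1))) *
                psig k (x + y) ((b :: c :: v).drop (t+1))))
          = ((∑ t ∈ Finset.range (v.length + 1),
              (x ^ (p.length + 1 + 1) * (x + y) ^ t) •
                (TensorAlgebra.ι k (blockProd (a :: (p ++ b :: c :: v.take t))) *
                  psig k (x + y) (v.drop t)))
            + y • (∑ t ∈ Finset.range (v.length + 1),
              (x ^ (p.length + 1) * (x + y) ^ t) •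
                (TensorAlgebra.ι k (blockProd (a :: (p ++ b :: c :: v.take t))) *
                  psig k (x + y) (v.drop t))))
            + x ^ (p.length + 1) •
                (TensorAlgebra.ι k (blockProd (a :: (p ++ [b]))) *
                  psig k (x + y) (c :: v)) := by
        simp only [List.length_cons]
        rw [Finset.sum_range_succ']
        congr 1
        · rw [Finset.smul_sum, ← Finset.sum_add_distrib]
          refine Finset.sum_congr rfl fun t ht => ?_
          have hc : x ^ (p.length + 1) * (x + y) ^ (t + 1)
              = x ^ (p.length + 1 + 1) * (x + y) ^ t + y * (x ^ (p.length + 1) * (x + y) ^ t) := by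
            ring
          rw [List.take_succ_cons, List.take_succ_cons, List.drop_succ_cons,
            List.drop_succ_cons, hc, add_smul, mul_smul y (x ^ (p.length + 1) * (x + y) ^ t)]
          simp only [List.cons_append]
        · simp only [List.take_succ_cons, List.take_zero, List.drop_succ_cons, List.drop_zero,
            pow_zero, mul_one, List.cons_append]
      -- (3) expand the first `E` on the RHS
      have h3 : E k x y ((a :: p) ++ [b]) (c :: v)
          = ((∑ j ∈ Finset.range (p.length + 1),
              x ^ j • (TensorAlgebra.ι k (blockProd (a :: p.take j)) *
                E k x y (p.drop j ++ [b]) (c :: v)))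
              + x ^ (p.length + 1) •
                (TensorAlgebra.ι k (blockProd (a :: (p ++ [b]))) *
                  psig k (x + y) (c :: v)))
            + (∑ t ∈ Finset.range (v.length + 1),
              (x ^ (p.length + 1 + 1) * (x + y) ^ t) •
                (TensorAlgebra.ι k (blockProd (a :: (p ++ b :: c :: v.take t))) *
                  psig k (x + y) (v.drop t))) := by
        rw [List.cons_append, E_cons, hlen]
        congr 1
        · rw [Finset.sum_range_succ]
          congr 1
          · refine Finset.sum_congr rfl fun j hj => ?_
            have hj' : j ≤ p.length := Nat.lt_succ_iff.mp (Finset.mem_range.mp hj)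
            rw [List.take_append_of_le_length hj', List.drop_append_of_le_length hj']
          · rw [List.take_of_length_le (le_of_eq hlen), List.drop_eq_nil_of_le (le_of_eq hlen),
              E_nil]
        · simp only [List.length_cons]
          refine Finset.sum_congr rfl fun t ht => ?_
          rw [List.take_succ_cons, List.drop_succ_cons]
          congr 3
          simp
      -- (4) expand the second `E` on the RHS
      have h4 : E k x y (a :: p) ((b * c) :: v)
          = (∑ j ∈ Finset.range (p.length + 1),
              x ^ j • (TensorAlgebra.ι k (blockProd (a :: p.take j)) *
                E k x y (p.drop j) ((b * c) :: v)))
            + (∑ t ∈ Finset.range (v.length + 1),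
              (x ^ (p.length + 1) * (x + y) ^ t) •
                (TensorAlgebra.ι k (blockProd (a :: (p ++ b :: c :: v.take t))) *
                  psig k (x + y) (v.drop t))) := by
        rw [E_cons]
        congr 1
        simp only [List.length_cons]
        refine Finset.sum_congr rfl fun t ht => ?_
        rw [List.take_succ_cons, List.drop_succ_cons]
        congr 2
        simp only [List.cons_append]
        exact congrArg _ (blockProd_mid a p b c (v.take t)).symm
      rw [E_cons, h1, h2, h3, h4, smul_add]
      abel
  termination_by p _ _ _ => p.length
  decreasing_by all_goals (simp [List.length_drop]; try omega)

lemma psig_nil (x : k) : psig k x ([] : List L) = 1 := by rw [psig, psi_nil]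

/-- Main composition lemma: applying `Σ^x` to `word p * Σ^y u` yields `E x y p u`. -/
lemma comp_aux (x y : k) (F : TensorAlgebra k L →ₗ[k] TensorAlgebra k L)
    (hF : ∀ w : List L, F (word k w) = psig k x w) :
    ∀ (u p : List L), F (word k p * psig k y u) = E k x y p u := by
  suffices h : ∀ (n : ℕ) (u : List L), u.length ≤ n → ∀ p : List L,
      F (word k p * psig k y u) = E k x y p u from
    fun u p => h u.length u le_rfl p
  intro n
  induction n with
  | zero =>
      intro u hu p
      obtain rfl : u = [] := List.eq_nil_of_length_eq_zero (Nat.le_zero.mp hu)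
      rw [psig_nil, mul_one, hF, E_nil_right]
  | succ m ih =>
      intro u hu p
      match u with
      | [] => rw [psig_nil, mul_one, hF, E_nil_right]
      | [b] =>
          rw [psig_singleton, E_single]
          have : word k p * TensorAlgebra.ι k b = word k (p ++ [b]) := by
            rw [word_append, word_cons, word_nil, mul_one]
          rw [this, hF]
      | b :: c :: v =>
          have hv : (c :: v).length ≤ m := by
            simpa [Nat.succ_le_succ_iff] using hu
          have hv' : ((b * c) :: v).length ≤ m := by
            simpa [Nat.succ_le_succ_iff] using hu
          have hword : word k (p ++ [b]) = word k p * TensorAlgebra.ι k b := by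
            rw [word_append, word_cons, word_nil, mul_one]
          rw [psig_three, mul_add, mul_smul_comm, ← mul_assoc, ← hword, map_add, map_smul,
            ih _ hv (p ++ [b]), ih _ hv' p, ← E_step]

lemma span_words :
    Submodule.span k (Set.range (word k : List L → TensorAlgebra k L)) = ⊤ := by
  rw [eq_top_iff]
  rintro z -
  induction z using TensorAlgebra.induction with
  | algebraMap r =>
      have h : algebraMap k (TensorAlgebra k L) r = r • word k ([] : List L) := by
        rw [word_nil, Algebra.algebraMap_eq_smul_one]
      rw [h]
      exact Submodule.smul_mem _ _ (Submodule.subset_span ⟨[], rfl⟩)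
  | ι a =>
      have h : TensorAlgebra.ι k a = word k [a] := by
        rw [word_cons, word_nil, mul_one]
      rw [h]
      exact Submodule.subset_span ⟨[a], rfl⟩
  | mul a b ha hb =>
      have hmul : Submodule.span k (Set.range (word k : List L → TensorAlgebra k L)) *
          Submodule.span k (Set.range (word k : List L → TensorAlgebra k L)) ≤
          Submodule.span k (Set.range (word k : List L → TensorAlgebra k L)) := by
        rw [Submodule.span_mul_span]
        refine Submodule.span_le.mpr ?_
        rintro _ ⟨_, ⟨u, rfl⟩, _, ⟨v, rfl⟩, rfl⟩
        exact Submodule.subset_span ⟨u ++ v, by rw [word_append]⟩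
      exact hmul (Submodule.mul_mem_mul ha hb)
  | add a b ha hb => exact Submodule.add_mem _ ha hb

/--
For `r, s ∈ k`, the maps `Σ^r = Ψ_{t/(1−rt)}` (with coefficients
`r^{n-1}`) satisfy `Σ^r ∘ Σ^s = Σ^{r+s}`; in particular each `Σ^r` is
invertible with inverse `Σ^{−r}`.
-/
theorem stmt6 (r s : k)
    (F G H N : TensorAlgebra k L →ₗ[k] TensorAlgebra k L)
    (hF : ∀ w : List L, F (word k w) = psi k (fun n => r ^ (n - 1)) w)
    (hG : ∀ w : List L, G (word k w) = psi k (fun n => s ^ (n - 1)) w)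
    (hH : ∀ w : List L, H (word k w) = psi k (fun n => (r + s) ^ (n - 1)) w)
    (hN : ∀ w : List L, N (word k w) = psi k (fun n => (-r) ^ (n - 1)) w) :
    (∀ x, F (G x) = H x) ∧ (∀ x, F (N x) = x) ∧ (∀ x, N (F x) = x) := by
  have key : ∀ (x y : k) (A : TensorAlgebra k L →ₗ[k] TensorAlgebra k L),
      (∀ w : List L, A (word k w) = psig k x w) →
      ∀ u : List L, A (psig k y u) = psig k (x + y) u := by
    intro x y A hA u
    have h := comp_aux k x y A hA u []
    rwa [word_nil, one_mul, E_nil] at h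
  have ext : ∀ (A B : TensorAlgebra k L →ₗ[k] TensorAlgebra k L),
      (∀ w : List L, A (word k w) = B (word k w)) → ∀ z, A z = B z := by
    intro A B h z
    have hAB : A = B := LinearMap.ext_on (span_words k)
      (by rintro _ ⟨w, rfl⟩; exact h w)
    rw [hAB]
  refine ⟨?_, ?_, ?_⟩
  · intro z
    have h := ext (F ∘ₗ G) H (fun w => by
      rw [LinearMap.comp_apply, hG w, key r s F hF w, hH w]) z
    simpa using h
  · intro z
    have h := ext (F ∘ₗ N) LinearMap.id (fun w => by
      rw [LinearMap.comp_apply, hN w, key r (-r) F hF w, add_neg_cancel, psig_zero,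
        LinearMap.id_apply]) z
    simpa using h
  · intro z
    have h := ext (N ∘ₗ F) LinearMap.id (fun w => by
      rw [LinearMap.comp_apply, hF w, key (-r) r N hN w, neg_add_cancel, psig_zero,
        LinearMap.id_apply]) z
    simpa using h
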